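/- Let d ≥ 1 be an integer and let 0 < α < d, 0 < β < d with α + β > d. Then for every x ∈ ℝ^d with x ≠ 0, the integral ∫_{ℝ^d} |y|^{-α} |x-y|^{-β} dy converges and equals C(α,β,d) |x|^{d-α-β}, where C(α,β,d) = π^{d/2} Γ((d-α)/2) Γ((d-β)/2) Γ((α+β-d)/2) / ( Γ(α/2) Γ(β/2) Γ(d-(α+β)/2) ). -/

import Mathlib

open MeasureTheory

open Set Real

section AuxLemmas

/- Laplace-transform representation of powers. -/
lemma aux_gamma_integrable {c r : ℝ} (hc : 0 < c) (hr : 0 < r) :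
    IntegrableOn (fun t : ℝ => t ^ (c - 1) * Real.exp (-(r * t))) (Ioi 0) volume := by
  have h := integrableOn_rpow_mul_exp_neg_mul_rpow (s := c - 1) (p := 1) (b := r)
    (by linarith) one_pos hr
  refine h.congr_fun (fun t ht => ?_) measurableSet_Ioi
  simp [Real.rpow_one, mul_comm]

lemma aux_gamma_lintegral {c r : ℝ} (hc : 0 < c) (hr : 0 < r) :
    ∫⁻ t in Ioi (0:ℝ), ENNReal.ofReal (t ^ (c - 1) * Real.exp (-(r * t))) =
      ENNReal.ofReal ((1 / r) ^ c * Real.Gamma c) := by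
  rw [← Real.integral_rpow_mul_exp_neg_mul_Ioi hc hr,
    ← ofReal_integral_eq_lintegral_ofReal (aux_gamma_integrable hc hr)]
  filter_upwards [ae_restrict_mem measurableSet_Ioi] with t ht
  have ht' : (0:ℝ) < t := ht
  positivity

lemma aux_lintegral_image_deriv {s : Set ℝ} {f f' : ℝ → ℝ} (hs : MeasurableSet s)
    (hf' : ∀ x ∈ s, HasDerivWithinAt f (f' x) s x) (hf : Set.InjOn f s) (g : ℝ → ENNReal) :
    ∫⁻ x in f '' s, g x = ∫⁻ x in s, ENNReal.ofReal |f' x| * g (f x) := by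
  simpa only [ContinuousLinearMap.det_toSpanSingleton] using
    lintegral_image_eq_lintegral_abs_det_fderiv_mul volume hs
      (fun x hx => (hf' x hx).hasFDerivWithinAt) hf g

lemma aux_lintegral_scale {b : ℝ} (hb : 0 < b) (g : ℝ → ENNReal) :
    ∫⁻ x in Ioi (0:ℝ), g x = ∫⁻ x in Ioi (0:ℝ), ENNReal.ofReal b * g (b * x) := by
  have himg : (fun x : ℝ => b * x) '' (Ioi 0) = Ioi 0 := by
    ext y; simp only [Set.mem_image, Set.mem_Ioi]
    constructor
    · rintro ⟨z, hz, rfl⟩; positivity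
    · intro hy; exact ⟨y / b, by positivity, by field_simp⟩
  have := aux_lintegral_image_deriv (s := Ioi 0) (f := fun x => b * x) (f' := fun _ => b)
    measurableSet_Ioi (fun x _ => by simpa using ((hasDerivAt_id x).const_mul b).hasDerivWithinAt)
    (fun u _ v _ h => mul_left_cancel₀ hb.ne' h) g
  rw [himg] at this
  rw [this, abs_of_pos hb]

lemma aux_real_beta {p q : ℝ} (hp : 0 < p) (hq : 0 < q) :
    ∫ u in (0:ℝ)..1, u ^ (p - 1) * (1 - u) ^ (q - 1) =
      Real.Gamma p * Real.Gamma q / Real.Gamma (p + q) := by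
  have hβ : Complex.betaIntegral p q =
      ((∫ u in (0:ℝ)..1, u ^ (p - 1) * (1 - u) ^ (q - 1) : ℝ) : ℂ) := by
    rw [Complex.betaIntegral, ← intervalIntegral.integral_ofReal]
    refine intervalIntegral.integral_congr_ae ?_
    have h1 : ∀ᵐ (u : ℝ), u ∈ Set.uIoc (0:ℝ) 1 →
        (u:ℂ) ^ ((p:ℂ) - 1) * (1 - (u:ℂ)) ^ ((q:ℂ) - 1)
        = ((u ^ (p - 1) * (1 - u) ^ (q - 1) : ℝ) : ℂ) := by
      filter_upwards with u hu
      rw [Set.uIoc_of_le (by norm_num : (0:ℝ) ≤ 1)] at hu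
      obtain ⟨h0, h1⟩ := hu
      have e1 : ((u:ℂ)) ^ ((p:ℂ) - 1) = ((u ^ (p - 1) : ℝ) : ℂ) := by
        rw [Complex.ofReal_cpow h0.le]; norm_cast
      have e2 : ((1:ℂ) - (u:ℂ)) ^ ((q:ℂ) - 1) = (((1 - u) ^ (q - 1) : ℝ) : ℂ) := by
        rw [Complex.ofReal_cpow (by linarith : (0:ℝ) ≤ 1 - u)]; push_cast; norm_cast
      rw [e1, e2, ← Complex.ofReal_mul]
    exact h1
  have hG := Complex.Gamma_mul_Gamma_eq_betaIntegral
    (s := (p:ℂ)) (t := (q:ℂ)) (by simpa using hp) (by simpa using hq)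
  rw [hβ] at hG
  have hpq : (0:ℝ) < p + q := by linarith
  have : (Real.Gamma p * Real.Gamma q : ℂ) =
      (Real.Gamma (p + q) * (∫ u in (0:ℝ)..1, u ^ (p - 1) * (1 - u) ^ (q - 1) : ℝ) : ℂ) := by
    push_cast [← Complex.Gamma_ofReal]
    simpa using hG
  have h2 : Real.Gamma p * Real.Gamma q =
      Real.Gamma (p + q) * ∫ u in (0:ℝ)..1, u ^ (p - 1) * (1 - u) ^ (q - 1) := by
    exact_mod_cast this
  rw [eq_div_iff (Real.Gamma_pos_of_pos hpq).ne']
  linarith [h2]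

lemma aux_beta_integrableOn {p q : ℝ} (hp : 0 < p) (hq : 0 < q) :
    IntegrableOn (fun u : ℝ => u ^ (p - 1) * (1 - u) ^ (q - 1)) (Ioc 0 1) volume := by
  have h := (Complex.betaIntegral_convergent (u := (p:ℂ)) (v := (q:ℂ))
    (by simpa using hp) (by simpa using hq)).1
  have h2 : IntegrableOn (fun u : ℝ => ((u ^ (p - 1) * (1 - u) ^ (q - 1) : ℝ) : ℂ))
      (Ioc 0 1) volume := by
    refine h.congr_fun (fun u hu => ?_) measurableSet_Ioc
    obtain ⟨h0, h1⟩ := hu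
    have e1 : ((u:ℂ)) ^ ((p:ℂ) - 1) = ((u ^ (p - 1) : ℝ) : ℂ) := by
      rw [Complex.ofReal_cpow h0.le]; norm_cast
    have e2 : ((1:ℂ) - (u:ℂ)) ^ ((q:ℂ) - 1) = (((1 - u) ^ (q - 1) : ℝ) : ℂ) := by
      rw [Complex.ofReal_cpow (by linarith : (0:ℝ) ≤ 1 - u)]; push_cast; norm_cast
    simp only [e1, e2, ← Complex.ofReal_mul]
  have := h2.re
  simp at this
  exact this

lemma aux_beta_Ioi {p q : ℝ} (hp : 0 < p) (hq : 0 < q) :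
    ∫⁻ v in Ioi (0:ℝ), ENNReal.ofReal (v ^ (p - 1) * (1 + v) ^ (-(p + q))) =
      ENNReal.ofReal (Real.Gamma p * Real.Gamma q / Real.Gamma (p + q)) := by
  set f : ℝ → ℝ := fun u => u / (1 - u) with hf_def
  have himg : f '' Ioo 0 1 = Ioi 0 := by
    ext v; simp only [Set.mem_image, Set.mem_Ioo, Set.mem_Ioi]
    constructor
    · rintro ⟨u, ⟨h0, h1⟩, rfl⟩
      have : (0:ℝ) < 1 - u := by linarith
      positivity
    · intro hv
      refine ⟨v / (1 + v), ⟨by positivity, ?_⟩, ?_⟩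
      · rw [div_lt_one (by positivity)]; linarith
      · have h1 : (0:ℝ) < 1 + v := by linarith
        simp only [hf_def]
        rw [show 1 - v/(1+v) = 1/(1+v) by field_simp; ring]
        field_simp
  have hderiv : ∀ u ∈ Ioo (0:ℝ) 1, HasDerivWithinAt f (((1 - u) ^ 2)⁻¹) (Ioo 0 1) u := by
    intro u hu
    have h1u : (1:ℝ) - u ≠ 0 := by rw [Set.mem_Ioo] at hu; intro h; linarith [hu.2]
    have := (hasDerivAt_id u).div ((hasDerivAt_const u (1:ℝ)).sub (hasDerivAt_id u)) h1u
    refine this.hasDerivWithinAt.congr_deriv ?_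
    simp only [Pi.sub_apply, id_eq]
    rw [inv_eq_one_div]; congr 1; ring
  have hinj : Set.InjOn f (Ioo 0 1) := by
    intro u hu v hv h
    rw [Set.mem_Ioo] at hu hv
    have h1u : (1:ℝ) - u ≠ 0 := by intro h'; linarith [hu.2]
    have h1v : (1:ℝ) - v ≠ 0 := by intro h'; linarith [hv.2]
    simp only [hf_def] at h
    field_simp at h
    linarith
  have key := aux_lintegral_image_deriv (measurableSet_Ioo)
    hderiv hinj (fun v => ENNReal.ofReal (v ^ (p - 1) * (1 + v) ^ (-(p + q))))
  rw [himg] at key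
  rw [key]
  have hcongr : ∀ u ∈ Ioo (0:ℝ) 1,
      ENNReal.ofReal |(((1 - u) ^ 2)⁻¹)| *
        ENNReal.ofReal (f u ^ (p - 1) * (1 + f u) ^ (-(p + q))) =
      ENNReal.ofReal (u ^ (p - 1) * (1 - u) ^ (q - 1)) := by
    intro u hu
    rw [Set.mem_Ioo] at hu
    have h0 : (0:ℝ) < u := hu.1
    have h1u : (0:ℝ) < 1 - u := by linarith [hu.2]
    rw [← ENNReal.ofReal_mul (by positivity)]
    congr 1
    have e0 : (1:ℝ) + f u = (1 - u)⁻¹ := by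
      simp only [hf_def]; field_simp; ring
    have e1 : f u ^ (p - 1) = u ^ (p - 1) * ((1 - u) ^ (p - 1))⁻¹ := by
      simp only [hf_def]
      rw [Real.div_rpow h0.le h1u.le, div_eq_mul_inv]
    have e2 : ((1:ℝ) + f u) ^ (-(p + q)) = (1 - u) ^ (p + q) := by
      rw [e0, Real.inv_rpow h1u.le, Real.rpow_neg h1u.le, inv_inv]
    have e3 : (((1 - u):ℝ) ^ 2)⁻¹ = (1 - u) ^ ((-2):ℝ) := by
      rw [Real.rpow_neg h1u.le]
      congr 1
      rw [← Real.rpow_natCast (1-u) 2]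
      norm_num
    rw [abs_of_pos (by positivity), e1, e2, e3,
      ← Real.rpow_neg h1u.le]
    calc (1-u) ^ ((-2):ℝ) * (u ^ (p-1) * (1-u) ^ (-(p-1)) * (1-u) ^ (p+q))
        = u ^ (p-1) * ((1-u) ^ ((-2):ℝ) * (1-u) ^ (-(p-1)) * (1-u) ^ (p+q)) := by ring
      _ = u ^ (p-1) * (1-u) ^ (q-1) := by
          rw [← Real.rpow_add h1u, ← Real.rpow_add h1u,
            show (-2:ℝ) + -(p-1) + (p+q) = q - 1 by ring]
  rw [setLIntegral_congr_fun measurableSet_Ioo hcongr]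
  have hbeta := aux_real_beta hp hq
  rw [intervalIntegral.integral_of_le (by norm_num : (0:ℝ) ≤ 1),
    integral_Ioc_eq_integral_Ioo] at hbeta
  rw [← ofReal_integral_eq_lintegral_ofReal
    ((aux_beta_integrableOn hp hq).mono_set Ioo_subset_Ioc_self) ?_, hbeta]
  filter_upwards [ae_restrict_mem measurableSet_Ioo] with u hu
  rw [Set.mem_Ioo] at hu
  have h0 : (0:ℝ) < u := hu.1
  have h1 : (0:ℝ) < 1 - u := by linarith [hu.2]
  positivity

section Gauss

variable {V : Type*} [NormedAddCommGroup V] [InnerProductSpace ℝ V] [FiniteDimensional ℝ V]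
  [MeasurableSpace V] [BorelSpace V]

lemma aux_integrable_gauss {b : ℝ} (hb : 0 < b) :
    Integrable (fun v : V => Real.exp (-(b * ‖v‖ ^ 2))) volume := by
  have h := (GaussianFourier.integrable_cexp_neg_mul_sq_norm_add (V := V) (b := (b:ℂ))
    (by simpa using hb) 0 0).norm
  refine h.congr (Filter.Eventually.of_forall fun v => ?_)
  simp only [Complex.norm_exp]
  norm_num
  left
  norm_cast

local notation "⟪" x ", " y "⟫" => inner (𝕜 := ℝ) x y

lemma aux_gauss_ptwise (x : V) {s t : ℝ} (hs : 0 < s) (ht : 0 < t) (y : V) :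
    Real.exp (-(s * ‖y‖ ^ 2)) * Real.exp (-(t * ‖x - y‖ ^ 2)) =
      Real.exp (-(s * t / (s + t) * ‖x‖ ^ 2)) *
        Real.exp (-((s + t) * ‖y - (t / (s + t)) • x‖ ^ 2)) := by
  rw [← Real.exp_add, ← Real.exp_add]
  congr 1
  have hst : s + t ≠ 0 := by positivity
  have h1 : ‖x - y‖ ^ 2 = ‖x‖ ^ 2 - 2 * ⟪x, y⟫ + ‖y‖ ^ 2 := norm_sub_sq_real x y
  have h2 : ‖y - (t / (s + t)) • x‖ ^ 2
      = ‖y‖ ^ 2 - 2 * (t / (s + t) * ⟪y, x⟫) + (t / (s + t)) ^ 2 * ‖x‖ ^ 2 := by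
    rw [norm_sub_sq_real, real_inner_smul_right, norm_smul]
    congr 2
    rw [mul_pow, Real.norm_eq_abs, sq_abs]
  have h3 : ⟪y, x⟫ = ⟪x, y⟫ := real_inner_comm _ _
  rw [h1, h2, h3]
  field_simp
  ring

lemma aux_gauss_conv_integrable (x : V) {s t : ℝ} (hs : 0 < s) (ht : 0 < t) :
    Integrable (fun y : V => Real.exp (-(s * ‖y‖ ^ 2)) * Real.exp (-(t * ‖x - y‖ ^ 2)))
      volume := by
  have hst : 0 < s + t := by linarith
  have h : Integrable (fun y : V =>
      Real.exp (-(s * t / (s + t) * ‖x‖ ^ 2)) *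
        Real.exp (-((s + t) * ‖y - (t / (s + t)) • x‖ ^ 2))) volume := by
    refine Integrable.const_mul ?_ _
    exact (aux_integrable_gauss hst).comp_sub_right ((t / (s + t)) • x)
  exact h.congr (Filter.Eventually.of_forall fun y => (aux_gauss_ptwise x hs ht y).symm)

lemma aux_gauss_conv_integral (x : V) {s t : ℝ} (hs : 0 < s) (ht : 0 < t) :
    ∫ y : V, Real.exp (-(s * ‖y‖ ^ 2)) * Real.exp (-(t * ‖x - y‖ ^ 2)) =
      (π / (s + t)) ^ ((Module.finrank ℝ V : ℝ) / 2) *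
        Real.exp (-(s * t / (s + t) * ‖x‖ ^ 2)) := by
  have hst : 0 < s + t := by linarith
  rw [integral_congr_ae (Filter.Eventually.of_forall (aux_gauss_ptwise x hs ht)),
    integral_const_mul]
  rw [show ∫ y : V, Real.exp (-((s + t) * ‖y - (t / (s + t)) • x‖ ^ 2))
      = ∫ y : V, Real.exp (-((s + t) * ‖y‖ ^ 2)) from
    integral_sub_right_eq_self (fun y => Real.exp (-((s + t) * ‖y‖ ^ 2))) _]
  have := GaussianFourier.integral_rexp_neg_mul_sq_norm (V := V) hst
  simp only [neg_mul] at this ⊢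
  rw [this]
  ring

end Gauss

lemma aux_pow2 {c : ℝ} (hc : 0 < c) (e : ℝ) : (1 / c ^ 2) ^ e = c ^ (-(2 * e)) := by
  rw [one_div, ← Real.rpow_natCast c 2]
  push_cast
  rw [← Real.rpow_neg hc.le, ← Real.rpow_mul hc.le]
  congr 1
  ring

end AuxLemmas

set_option maxHeartbeats 2000000 in
/-- Convolution of Riesz-type kernels:
For `d ≥ 1`, `0 < α < d`, `0 < β < d` with `α + β > d`, and `x ≠ 0` in `ℝ^d`,
the integral `∫ |y|^{-α} |x-y|^{-β} dy` converges and equals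
`C(α,β,d) |x|^{d-α-β}` with the explicit Gamma-function constant. -/
theorem stmt_1 (d : ℕ) (hd : 1 ≤ d) (α β : ℝ)
    (hα0 : 0 < α) (hαd : α < d) (hβ0 : 0 < β) (hβd : β < d) (hαβ : (d : ℝ) < α + β)
    (x : EuclideanSpace ℝ (Fin d)) (hx : x ≠ 0) :
    Integrable (fun y : EuclideanSpace ℝ (Fin d) => ‖y‖ ^ (-α) * ‖x - y‖ ^ (-β)) volume ∧
    ∫ y : EuclideanSpace ℝ (Fin d), ‖y‖ ^ (-α) * ‖x - y‖ ^ (-β) =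
      (Real.pi ^ ((d : ℝ) / 2) *
          (Real.Gamma (((d : ℝ) - α) / 2) * Real.Gamma (((d : ℝ) - β) / 2) *
            Real.Gamma ((α + β - d) / 2)) /
        (Real.Gamma (α / 2) * Real.Gamma (β / 2) * Real.Gamma ((d : ℝ) - (α + β) / 2))) *
        ‖x‖ ^ ((d : ℝ) - α - β) := by
  classical
  haveI : Nontrivial (EuclideanSpace ℝ (Fin d)) := nontrivial_of_ne x 0 hx
  have hR : 0 < ‖x‖ := norm_pos_iff.mpr hx
  have hdR : (0:ℝ) < (d:ℝ) := by positivity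
  have ha0 : 0 < α / 2 := by linarith
  have hb0 : 0 < β / 2 := by linarith
  have hγ0 : 0 < (α + β - (d:ℝ)) / 2 := by linarith
  have hq0 : 0 < ((d:ℝ) - α) / 2 := by linarith
  have hp0 : 0 < ((d:ℝ) - β) / 2 := by linarith
  have hpq0 : (0:ℝ) < (d:ℝ) - (α + β) / 2 := by linarith
  have hGa := Real.Gamma_pos_of_pos ha0
  have hGb := Real.Gamma_pos_of_pos hb0
  have hGγ := Real.Gamma_pos_of_pos hγ0
  have hGq := Real.Gamma_pos_of_pos hq0
  have hGp := Real.Gamma_pos_of_pos hp0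
  have hGpq := Real.Gamma_pos_of_pos hpq0
  have hC0 : 0 ≤ (Real.pi ^ ((d : ℝ) / 2) *
          (Real.Gamma (((d : ℝ) - α) / 2) * Real.Gamma (((d : ℝ) - β) / 2) *
            Real.Gamma ((α + β - d) / 2)) /
        (Real.Gamma (α / 2) * Real.Gamma (β / 2) * Real.Gamma ((d : ℝ) - (α + β) / 2))) *
        ‖x‖ ^ ((d : ℝ) - α - β) := by
    apply mul_nonneg _ (Real.rpow_nonneg hR.le _)
    apply div_nonneg
    · exact mul_nonneg (Real.rpow_nonneg Real.pi_nonneg _)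
        (mul_nonneg (mul_nonneg hGq.le hGp.le) hGγ.le)
    · exact mul_nonneg (mul_nonneg hGa.le hGb.le) hGpq.le
  have hFmeas : Measurable (fun y : EuclideanSpace ℝ (Fin d) => ‖y‖ ^ (-α) * ‖x - y‖ ^ (-β)) := by
    fun_prop
  have hFnn : 0 ≤ᵐ[volume] (fun y : EuclideanSpace ℝ (Fin d) => ‖y‖ ^ (-α) * ‖x - y‖ ^ (-β)) :=
    Filter.Eventually.of_forall fun y => by positivity
  -- The main lintegral computation
  have hL : (∫⁻ y : EuclideanSpace ℝ (Fin d), ENNReal.ofReal (‖y‖ ^ (-α) * ‖x - y‖ ^ (-β))) =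
      ENNReal.ofReal ((Real.pi ^ ((d : ℝ) / 2) *
          (Real.Gamma (((d : ℝ) - α) / 2) * Real.Gamma (((d : ℝ) - β) / 2) *
            Real.Gamma ((α + β - d) / 2)) /
        (Real.Gamma (α / 2) * Real.Gamma (β / 2) * Real.Gamma ((d : ℝ) - (α + β) / 2))) *
        ‖x‖ ^ ((d : ℝ) - α - β)) := by
    -- Step 1: subordination
    have step1 : (∫⁻ y : EuclideanSpace ℝ (Fin d), ENNReal.ofReal (‖y‖ ^ (-α) * ‖x - y‖ ^ (-β))) =
        ENNReal.ofReal ((Real.Gamma (α/2))⁻¹ * (Real.Gamma (β/2))⁻¹) *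
        ∫⁻ y : EuclideanSpace ℝ (Fin d), ∫⁻ s in Set.Ioi (0:ℝ), ∫⁻ t in Set.Ioi (0:ℝ),
          ENNReal.ofReal ((s ^ (α/2 - 1) * Real.exp (-(‖y‖^2 * s))) *
            (t ^ (β/2 - 1) * Real.exp (-(‖x - y‖^2 * t)))) := by
      rw [← lintegral_const_mul' _ _ ENNReal.ofReal_ne_top]
      apply lintegral_congr_ae
      have h1 : ∀ᵐ y : EuclideanSpace ℝ (Fin d) ∂volume, y ≠ 0 := by
        rw [ae_iff]
        have he : {y : EuclideanSpace ℝ (Fin d) | ¬ y ≠ 0} = {0} := by ext y; simp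
        rw [he]; exact measure_singleton _
      have h2 : ∀ᵐ y : EuclideanSpace ℝ (Fin d) ∂volume, y ≠ x := by
        rw [ae_iff]
        have he : {y : EuclideanSpace ℝ (Fin d) | ¬ y ≠ x} = {x} := by ext y; simp
        rw [he]; exact measure_singleton _
      filter_upwards [h1, h2] with y hy0 hyx
      have hny : 0 < ‖y‖ := norm_pos_iff.mpr hy0
      have hnxy : 0 < ‖x - y‖ := norm_pos_iff.mpr (sub_ne_zero.mpr (Ne.symm hyx))
      have hin : ∀ s ∈ Set.Ioi (0:ℝ),
          (∫⁻ t in Set.Ioi (0:ℝ), ENNReal.ofReal ((s ^ (α/2 - 1) * Real.exp (-(‖y‖^2 * s))) *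
            (t ^ (β/2 - 1) * Real.exp (-(‖x - y‖^2 * t))))) =
          ENNReal.ofReal (s ^ (α/2 - 1) * Real.exp (-(‖y‖^2 * s))) *
            ENNReal.ofReal ((1 / ‖x - y‖^2) ^ (β/2) * Real.Gamma (β/2)) := by
        intro s hs
        have hs' : (0:ℝ) < s := hs
        rw [← aux_gamma_lintegral hb0 (show (0:ℝ) < ‖x - y‖^2 by positivity),
          ← lintegral_const_mul' _ _ ENNReal.ofReal_ne_top]
        apply setLIntegral_congr_fun measurableSet_Ioi
        intro t ht
        dsimp only
        rw [← ENNReal.ofReal_mul (by positivity)]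
      rw [setLIntegral_congr_fun measurableSet_Ioi hin,
        lintegral_mul_const' _ _ ENNReal.ofReal_ne_top,
        aux_gamma_lintegral ha0 (show (0:ℝ) < ‖y‖^2 by positivity),
        ← ENNReal.ofReal_mul (by positivity),
        ← ENNReal.ofReal_mul (by positivity)]
      congr 1
      have e1 : (1/‖y‖^2 : ℝ) ^ (α/2) = ‖y‖ ^ (-α) := by
        rw [aux_pow2 hny]; congr 1; ring
      have e2 : (1/‖x - y‖^2 : ℝ) ^ (β/2) = ‖x - y‖ ^ (-β) := by
        rw [aux_pow2 hnxy]; congr 1; ring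
      rw [e1, e2]
      field_simp
    -- Step 2: Fubini swaps
    have meas1 : Measurable (fun p : EuclideanSpace ℝ (Fin d) × ℝ =>
        ∫⁻ t in Set.Ioi (0:ℝ), ENNReal.ofReal ((p.2 ^ (α/2 - 1) * Real.exp (-(‖p.1‖^2 * p.2))) *
          (t ^ (β/2 - 1) * Real.exp (-(‖x - p.1‖^2 * t))))) := by
      apply Measurable.lintegral_prod_right
        (f := fun (p : EuclideanSpace ℝ (Fin d) × ℝ) (t : ℝ) =>
          ENNReal.ofReal ((p.2 ^ (α/2 - 1) * Real.exp (-(‖p.1‖^2 * p.2))) *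
            (t ^ (β/2 - 1) * Real.exp (-(‖x - p.1‖^2 * t)))))
      fun_prop
    have step2 : (∫⁻ y : EuclideanSpace ℝ (Fin d), ∫⁻ s in Set.Ioi (0:ℝ), ∫⁻ t in Set.Ioi (0:ℝ),
          ENNReal.ofReal ((s ^ (α/2 - 1) * Real.exp (-(‖y‖^2 * s))) *
            (t ^ (β/2 - 1) * Real.exp (-(‖x - y‖^2 * t))))) =
        ∫⁻ s in Set.Ioi (0:ℝ), ∫⁻ t in Set.Ioi (0:ℝ), ∫⁻ y : EuclideanSpace ℝ (Fin d),
          ENNReal.ofReal ((s ^ (α/2 - 1) * Real.exp (-(‖y‖^2 * s))) *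
            (t ^ (β/2 - 1) * Real.exp (-(‖x - y‖^2 * t)))) := by
      rw [lintegral_lintegral_swap meas1.aemeasurable]
      apply lintegral_congr
      intro s
      exact lintegral_lintegral_swap (by fun_prop : Measurable
        (fun q : EuclideanSpace ℝ (Fin d) × ℝ =>
          ENNReal.ofReal ((s ^ (α/2 - 1) * Real.exp (-(‖q.1‖^2 * s))) *
            (q.2 ^ (β/2 - 1) * Real.exp (-(‖x - q.1‖^2 * q.2)))))).aemeasurable
    -- Step 3: Gaussian evaluation of the y-integral
    have step3 : (∫⁻ s in Set.Ioi (0:ℝ), ∫⁻ t in Set.Ioi (0:ℝ), ∫⁻ y : EuclideanSpace ℝ (Fin d),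
          ENNReal.ofReal ((s ^ (α/2 - 1) * Real.exp (-(‖y‖^2 * s))) *
            (t ^ (β/2 - 1) * Real.exp (-(‖x - y‖^2 * t))))) =
        ∫⁻ s in Set.Ioi (0:ℝ), ∫⁻ t in Set.Ioi (0:ℝ),
          ENNReal.ofReal (Real.pi ^ ((d:ℝ)/2)) *
            ENNReal.ofReal (s ^ (α/2 - 1) * t ^ (β/2 - 1) * (s+t) ^ (-((d:ℝ)/2)) *
              Real.exp (-(s*t/(s+t)*‖x‖^2))) := by
      apply setLIntegral_congr_fun measurableSet_Ioi
      intro s hs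
      apply setLIntegral_congr_fun measurableSet_Ioi
      intro t ht
      have hs' : (0:ℝ) < s := hs
      have ht' : (0:ℝ) < t := ht
      have hst : (0:ℝ) < s + t := by linarith
      have hb1 : ∀ y : EuclideanSpace ℝ (Fin d),
          ENNReal.ofReal ((s ^ (α/2 - 1) * Real.exp (-(‖y‖^2 * s))) *
            (t ^ (β/2 - 1) * Real.exp (-(‖x - y‖^2 * t)))) =
          ENNReal.ofReal (s ^ (α/2 - 1) * t ^ (β/2 - 1)) *
            ENNReal.ofReal (Real.exp (-(s * ‖y‖^2)) * Real.exp (-(t * ‖x - y‖^2))) := by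
        intro y
        rw [← ENNReal.ofReal_mul (by positivity)]
        congr 1
        rw [mul_comm (‖y‖^2) s, mul_comm (‖x - y‖^2) t]
        ring
      simp_rw [hb1]
      rw [lintegral_const_mul' _ _ ENNReal.ofReal_ne_top,
        ← ofReal_integral_eq_lintegral_ofReal (aux_gauss_conv_integrable x hs' ht')
          (Filter.Eventually.of_forall fun y => by positivity),
        aux_gauss_conv_integral x hs' ht']
      rw [finrank_euclideanSpace_fin]
      rw [← ENNReal.ofReal_mul (by positivity), ← ENNReal.ofReal_mul (by positivity)]
      congr 1
      rw [Real.div_rpow Real.pi_nonneg hst.le, Real.rpow_neg hst.le]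
      ring
    -- Step 4: pull out the pi constant
    have step4 : (∫⁻ s in Set.Ioi (0:ℝ), ∫⁻ t in Set.Ioi (0:ℝ),
          ENNReal.ofReal (Real.pi ^ ((d:ℝ)/2)) *
            ENNReal.ofReal (s ^ (α/2 - 1) * t ^ (β/2 - 1) * (s+t) ^ (-((d:ℝ)/2)) *
              Real.exp (-(s*t/(s+t)*‖x‖^2)))) =
        ENNReal.ofReal (Real.pi ^ ((d:ℝ)/2)) *
          ∫⁻ s in Set.Ioi (0:ℝ), ∫⁻ t in Set.Ioi (0:ℝ),
            ENNReal.ofReal (s ^ (α/2 - 1) * t ^ (β/2 - 1) * (s+t) ^ (-((d:ℝ)/2)) *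
              Real.exp (-(s*t/(s+t)*‖x‖^2))) := by
      rw [← lintegral_const_mul' _ _ ENNReal.ofReal_ne_top]
      apply lintegral_congr
      intro s
      exact lintegral_const_mul' _ _ ENNReal.ofReal_ne_top
    -- Step 5: scaling t = s * w in the inner integral
    have step5 : (∫⁻ s in Set.Ioi (0:ℝ), ∫⁻ t in Set.Ioi (0:ℝ),
          ENNReal.ofReal (s ^ (α/2 - 1) * t ^ (β/2 - 1) * (s+t) ^ (-((d:ℝ)/2)) *
              Real.exp (-(s*t/(s+t)*‖x‖^2)))) =
        ∫⁻ s in Set.Ioi (0:ℝ), ∫⁻ w in Set.Ioi (0:ℝ),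
          ENNReal.ofReal ((w ^ (β/2 - 1) * (1+w) ^ (-((d:ℝ)/2))) *
            (s ^ ((α+β-(d:ℝ))/2 - 1) * Real.exp (-((w/(1+w)*‖x‖^2) * s)))) := by
      apply setLIntegral_congr_fun measurableSet_Ioi
      intro s hs
      dsimp only
      have hs' : (0:ℝ) < s := hs
      rw [aux_lintegral_scale hs' (fun t => ENNReal.ofReal (s ^ (α/2 - 1) * t ^ (β/2 - 1) *
        (s+t) ^ (-((d:ℝ)/2)) * Real.exp (-(s*t/(s+t)*‖x‖^2))))]
      apply setLIntegral_congr_fun measurableSet_Ioi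
      intro w hw
      dsimp only
      have hw' : (0:ℝ) < w := hw
      have h1w : (0:ℝ) < 1 + w := by linarith
      rw [← ENNReal.ofReal_mul hs'.le]
      congr 1
      have e1 : (s*w) ^ (β/2 - 1) = s ^ (β/2 - 1) * w ^ (β/2 - 1) :=
        Real.mul_rpow hs'.le hw'.le
      have e2 : s + s*w = s * (1+w) := by ring
      have e3 : (s*(1+w)) ^ (-((d:ℝ)/2)) = s ^ (-((d:ℝ)/2)) * (1+w) ^ (-((d:ℝ)/2)) :=
        Real.mul_rpow hs'.le h1w.le
      have e4 : s*(s*w)/(s+s*w)*‖x‖^2 = (w/(1+w)*‖x‖^2) * s := by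
        rw [e2]; field_simp
      have e5 : s * s ^ (α/2 - 1) * s ^ (β/2 - 1) * s ^ (-((d:ℝ)/2)) =
          s ^ ((α+β-(d:ℝ))/2 - 1) := by
        nth_rw 1 [← Real.rpow_one s]
        rw [← Real.rpow_add hs', ← Real.rpow_add hs', ← Real.rpow_add hs']
        congr 1
        ring
      rw [e4, e1, e2, e3]
      calc s * (s ^ (α/2 - 1) * (s ^ (β/2 - 1) * w ^ (β/2 - 1)) *
              (s ^ (-((d:ℝ)/2)) * (1+w) ^ (-((d:ℝ)/2))) *
              Real.exp (-((w/(1+w)*‖x‖^2) * s)))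
          = (s * s ^ (α/2 - 1) * s ^ (β/2 - 1) * s ^ (-((d:ℝ)/2))) *
              (w ^ (β/2 - 1) * (1+w) ^ (-((d:ℝ)/2)) *
                Real.exp (-((w/(1+w)*‖x‖^2) * s))) := by ring
        _ = (w ^ (β/2 - 1) * (1+w) ^ (-((d:ℝ)/2))) *
              (s ^ ((α+β-(d:ℝ))/2 - 1) * Real.exp (-((w/(1+w)*‖x‖^2) * s))) := by
            rw [e5]; ring
    -- Step 6: swap s and w
    have step6 : (∫⁻ s in Set.Ioi (0:ℝ), ∫⁻ w in Set.Ioi (0:ℝ),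
          ENNReal.ofReal ((w ^ (β/2 - 1) * (1+w) ^ (-((d:ℝ)/2))) *
            (s ^ ((α+β-(d:ℝ))/2 - 1) * Real.exp (-((w/(1+w)*‖x‖^2) * s))))) =
        ∫⁻ w in Set.Ioi (0:ℝ), ∫⁻ s in Set.Ioi (0:ℝ),
          ENNReal.ofReal ((w ^ (β/2 - 1) * (1+w) ^ (-((d:ℝ)/2))) *
            (s ^ ((α+β-(d:ℝ))/2 - 1) * Real.exp (-((w/(1+w)*‖x‖^2) * s)))) :=
      lintegral_lintegral_swap (by fun_prop : Measurable (fun p : ℝ × ℝ =>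
        ENNReal.ofReal ((p.2 ^ (β/2 - 1) * (1+p.2) ^ (-((d:ℝ)/2))) *
          (p.1 ^ ((α+β-(d:ℝ))/2 - 1) *
            Real.exp (-((p.2/(1+p.2)*‖x‖^2) * p.1)))))).aemeasurable
    -- Step 7: Gamma evaluation of the s-integral
    have step7 : (∫⁻ w in Set.Ioi (0:ℝ), ∫⁻ s in Set.Ioi (0:ℝ),
          ENNReal.ofReal ((w ^ (β/2 - 1) * (1+w) ^ (-((d:ℝ)/2))) *
            (s ^ ((α+β-(d:ℝ))/2 - 1) * Real.exp (-((w/(1+w)*‖x‖^2) * s))))) =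
        ∫⁻ w in Set.Ioi (0:ℝ),
          ENNReal.ofReal (Real.Gamma ((α+β-(d:ℝ))/2) * ‖x‖ ^ ((d:ℝ) - α - β)) *
            ENNReal.ofReal (w ^ (((d:ℝ)-α)/2 - 1) *
              (1+w) ^ (-((((d:ℝ)-α)/2) + (((d:ℝ)-β)/2)))) := by
      apply setLIntegral_congr_fun measurableSet_Ioi
      intro w hw
      have hw' : (0:ℝ) < w := hw
      have h1w : (0:ℝ) < 1 + w := by linarith
      have hcw : (0:ℝ) < w/(1+w)*‖x‖^2 := by positivity
      have hb2 : ∀ s : ℝ, ENNReal.ofReal ((w ^ (β/2 - 1) * (1+w) ^ (-((d:ℝ)/2))) *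
            (s ^ ((α+β-(d:ℝ))/2 - 1) * Real.exp (-((w/(1+w)*‖x‖^2) * s)))) =
          ENNReal.ofReal (w ^ (β/2 - 1) * (1+w) ^ (-((d:ℝ)/2))) *
            ENNReal.ofReal (s ^ ((α+β-(d:ℝ))/2 - 1) *
              Real.exp (-((w/(1+w)*‖x‖^2) * s))) := fun s =>
        ENNReal.ofReal_mul (by positivity)
      simp_rw [hb2]
      rw [lintegral_const_mul' _ _ ENNReal.ofReal_ne_top,
        aux_gamma_lintegral hγ0 hcw,
        ← ENNReal.ofReal_mul (by positivity),
        ← ENNReal.ofReal_mul (by positivity)]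
      congr 1
      -- real identity
      have f1 : (1/(w/(1+w)*‖x‖^2) : ℝ) = (1+w) * (w⁻¹ * (1/‖x‖^2)) := by
        field_simp
      have f2 : ((1+w) * (w⁻¹ * (1/‖x‖^2))) ^ ((α+β-(d:ℝ))/2) =
          (1+w) ^ ((α+β-(d:ℝ))/2) * (w⁻¹ ^ ((α+β-(d:ℝ))/2) *
            (1/‖x‖^2) ^ ((α+β-(d:ℝ))/2)) := by
        rw [Real.mul_rpow h1w.le (by positivity), Real.mul_rpow (by positivity) (by positivity)]
      have f3 : (w⁻¹ : ℝ) ^ ((α+β-(d:ℝ))/2) = w ^ (-((α+β-(d:ℝ))/2)) := by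
        rw [Real.inv_rpow hw'.le, ← Real.rpow_neg hw'.le]
      have f4 : (1/‖x‖^2 : ℝ) ^ ((α+β-(d:ℝ))/2) = ‖x‖ ^ ((d:ℝ) - α - β) := by
        rw [aux_pow2 hR]; congr 1; ring
      rw [f1, f2, f3, f4]
      have f5 : w ^ (β/2 - 1) * w ^ (-((α+β-(d:ℝ))/2)) = w ^ (((d:ℝ)-α)/2 - 1) := by
        rw [← Real.rpow_add hw']; congr 1; ring
      have f6 : (1+w) ^ (-((d:ℝ)/2)) * (1+w) ^ ((α+β-(d:ℝ))/2) =
          (1+w) ^ (-((((d:ℝ)-α)/2) + (((d:ℝ)-β)/2))) := by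
        rw [← Real.rpow_add h1w]; congr 1; ring
      calc (w ^ (β/2 - 1) * (1+w) ^ (-((d:ℝ)/2))) *
            ((1+w) ^ ((α+β-(d:ℝ))/2) * (w ^ (-((α+β-(d:ℝ))/2)) * ‖x‖ ^ ((d:ℝ) - α - β)) *
              Real.Gamma ((α+β-(d:ℝ))/2))
          = (Real.Gamma ((α+β-(d:ℝ))/2) * ‖x‖ ^ ((d:ℝ) - α - β)) *
              ((w ^ (β/2 - 1) * w ^ (-((α+β-(d:ℝ))/2))) *
                ((1+w) ^ (-((d:ℝ)/2)) * (1+w) ^ ((α+β-(d:ℝ))/2))) := by ring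
        _ = (Real.Gamma ((α+β-(d:ℝ))/2) * ‖x‖ ^ ((d:ℝ) - α - β)) *
              (w ^ (((d:ℝ)-α)/2 - 1) *
                (1+w) ^ (-((((d:ℝ)-α)/2) + (((d:ℝ)-β)/2)))) := by rw [f5, f6]
    -- Step 8: Beta integral
    have step8 : (∫⁻ w in Set.Ioi (0:ℝ),
          ENNReal.ofReal (Real.Gamma ((α+β-(d:ℝ))/2) * ‖x‖ ^ ((d:ℝ) - α - β)) *
            ENNReal.ofReal (w ^ (((d:ℝ)-α)/2 - 1) *
              (1+w) ^ (-((((d:ℝ)-α)/2) + (((d:ℝ)-β)/2))))) =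
        ENNReal.ofReal (Real.Gamma ((α+β-(d:ℝ))/2) * ‖x‖ ^ ((d:ℝ) - α - β)) *
          ENNReal.ofReal (Real.Gamma (((d:ℝ)-α)/2) * Real.Gamma (((d:ℝ)-β)/2) /
            Real.Gamma ((((d:ℝ)-α)/2) + (((d:ℝ)-β)/2))) := by
      rw [lintegral_const_mul' _ _ ENNReal.ofReal_ne_top, aux_beta_Ioi hq0 hp0]
    -- Combine everything
    rw [step1, step2, step3, step4, step5, step6, step7, step8]
    rw [← ENNReal.ofReal_mul (by positivity),
      ← ENNReal.ofReal_mul (by positivity),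
      ← ENNReal.ofReal_mul (by positivity)]
    congr 1
    rw [show (((d:ℝ)-α)/2) + (((d:ℝ)-β)/2) = (d:ℝ) - (α + β) / 2 by ring]
    field_simp
  constructor
  · exact (lintegral_ofReal_ne_top_iff_integrable hFmeas.aestronglyMeasurable hFnn).mp
      (by rw [hL]; exact ENNReal.ofReal_ne_top)
  · rw [integral_eq_lintegral_of_nonneg_ae hFnn hFmeas.aestronglyMeasurable, hL,
      ENNReal.toReal_ofReal hC0]
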